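/- If e_{i_1,j_1}, ..., e_{i_m,j_m} are upper triangular matrix units (i_q ≤ j_q for all q) whose product in the given order equals e_{i_1,j_m} ≠ 0, then for any permutation σ of {1,...,m}, the product e_{i_{σ(1)},j_{σ(1)}} ⋯ e_{i_{σ(m)},j_{σ(m)}} is either 0 or equal to e_{i_1,j_m}. -/

import Mathlib

open Matrix

lemma aux {K : Type*} [Field K] {n : ℕ} : ∀ (m : ℕ) (f g : Fin (m+1) → Fin n),
    (List.ofFn fun q => Matrix.single (f q) (g q) (1 : K)).prod = 0 ∨
    ((∀ q : Fin m, g q.castSucc = f q.succ) ∧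
      (List.ofFn fun q => Matrix.single (f q) (g q) (1 : K)).prod
        = Matrix.single (f 0) (g (Fin.last m)) (1 : K)) := by
  intro m
  induction m with
  | zero =>
    intro f g
    right
    refine ⟨fun q => q.elim0, ?_⟩
    simp [List.ofFn_succ]
  | succ m ih =>
    intro f g
    have hsplit : (List.ofFn fun q : Fin (m+2) => Matrix.single (f q) (g q) (1 : K)).prod
        = Matrix.single (f 0) (g 0) (1 : K) *
          (List.ofFn fun q : Fin (m+1) =>
            Matrix.single (f q.succ) (g q.succ) (1 : K)).prod := by
      simp [List.ofFn_succ]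
    rcases ih (fun q => f q.succ) (fun q => g q.succ) with h0 | ⟨hch, heq⟩
    · left; rw [hsplit, h0, mul_zero]
    · by_cases hc : g 0 = f 1
      · right
        constructor
        · intro q
          refine Fin.cases ?_ (fun p => ?_) q
          · simpa using hc
          · have := hch p
            simpa only [Fin.succ_castSucc] using this
        · rw [hsplit, heq]
          simp only [Fin.succ_zero_eq_one, Fin.succ_last]
          rw [hc, Matrix.single_mul_single_same, one_mul]
      · left
        rw [hsplit, heq]
        simp only [Fin.succ_zero_eq_one]
        exact Matrix.single_mul_single_of_ne (h := hc) (d := 1) ..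

/-- If upper triangular matrix units `e_{i_q, j_q}` (with `i_q ≤ j_q`)
multiply in the given order to `e_{i_1, j_m}`, then any reordered product is either `0`
or equal to `e_{i_1, j_m}`. -/
theorem stmt0 {K : Type*} [Field K] {n m : ℕ} (hn : 2 ≤ n)
    (i j : Fin (m + 1) → Fin n) (hij : ∀ q, i q ≤ j q)
    (hprod : (List.ofFn fun q => Matrix.single (i q) (j q) (1 : K)).prod
      = Matrix.single (i 0) (j (Fin.last m)) (1 : K))
    (σ : Equiv.Perm (Fin (m + 1))) :
    (List.ofFn fun q => Matrix.single (i (σ q)) (j (σ q)) (1 : K)).prod = 0 ∨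
    (List.ofFn fun q => Matrix.single (i (σ q)) (j (σ q)) (1 : K)).prod
      = Matrix.single (i 0) (j (Fin.last m)) (1 : K) := by
  rcases aux (K := K) m (fun q => i (σ q)) (fun q => j (σ q)) with h0 | ⟨hchσ, heqσ⟩
  · exact Or.inl h0
  · right
    have hne : (Matrix.single (i 0) (j (Fin.last m)) (1 : K)) ≠ 0 := by
      intro h
      have h2 := congrFun (congrFun h (i 0)) (j (Fin.last m))
      simp [Matrix.single] at h2
    have hch : ∀ q : Fin m, j q.castSucc = i q.succ := by
      rcases aux (K := K) m i j with h0 | ⟨hch, _⟩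
      · rw [hprod] at h0; exact absurd h0 hne
      · exact hch
    have monI : Monotone i := Fin.monotone_iff_le_succ.mpr fun q => (hch q) ▸ hij q.castSucc
    have monJ : Monotone j := Fin.monotone_iff_le_succ.mpr fun q => (hch q).le.trans (hij q.succ)
    have monIσ : Monotone (fun q => i (σ q)) :=
      Fin.monotone_iff_le_succ.mpr fun q => (hij (σ q.castSucc)).trans (hchσ q).le
    have monJσ : Monotone (fun q => j (σ q)) :=
      Fin.monotone_iff_le_succ.mpr fun q => (hchσ q).le.trans (hij (σ q.succ))
    have hiσ : i (σ 0) = i 0 := by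
      refine le_antisymm ?_ (monI (Fin.zero_le (σ 0)))
      have := monIσ (Fin.zero_le (σ.symm 0))
      simpa using this
    have hjσ : j (σ (Fin.last m)) = j (Fin.last m) := by
      refine le_antisymm (monJ (Fin.le_last (σ (Fin.last m)))) ?_
      have := monJσ (Fin.le_last (σ.symm (Fin.last m)))
      simpa using this
    rw [heqσ, hiσ, hjσ]
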